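/- Let μ be a probability measure on ℝⁿ with continuous density ρ invariant under an isometry R ∈ O(n) (ρ∘R = ρ), and let g : ℝⁿ → ℝ be a C¹ R-invariant function (g∘R = g). Set E = Fix(R)⊥. Then for every x ∈ ℝⁿ, the conditional measure μ_{x,E} on the affine slice x + E (with density proportional to y ↦ ρ(P_{E⊥}x + y) on E) satisfies ∫_E P_E ∇g(y) dμ_{x,E}(y) = 0. -/

import Mathlib

open MeasureTheory

/-- The conditional measure `μ_{x,E}` on the slice `P_{E⊥}x + E` (with density proportional
to `y ↦ ρ(P_{E⊥}x + y)`) gives mean zero to `P_E ∇g`; here `E = Fix(R)⊥`, so `E⊥ = Fix(R)`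
and the slice is parametrized by a linear isometry `ι` with range `E`. -/
theorem stmt16 (n k : ℕ)
    (ρ : EuclideanSpace ℝ (Fin n) → ℝ) (hρcont : Continuous ρ) (hρpos : ∀ x, 0 ≤ ρ x)
    (hρprob : ∫ x, ρ x = 1)
    (R : EuclideanSpace ℝ (Fin n) ≃ₗᵢ[ℝ] EuclideanSpace ℝ (Fin n))
    (hρinv : ∀ x, ρ (R x) = ρ x)
    (g : EuclideanSpace ℝ (Fin n) → ℝ) (hg : ContDiff ℝ 1 g)
    (hginv : ∀ x, g (R x) = g x)
    (F E : Submodule ℝ (EuclideanSpace ℝ (Fin n)))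
    (hF : ∀ x, x ∈ F ↔ R x = x) (hE : E = Fᗮ)
    (ι : EuclideanSpace ℝ (Fin k) →ₗᵢ[ℝ] EuclideanSpace ℝ (Fin n))
    (hι : LinearMap.range ι.toLinearMap = E) :
    ∀ x : EuclideanSpace ℝ (Fin n),
      (∫ y : EuclideanSpace ℝ (Fin k),
        ρ ((Submodule.orthogonalProjection F x : EuclideanSpace ℝ (Fin n)) + ι y) •
          (Submodule.orthogonalProjection E
            (gradient g ((Submodule.orthogonalProjection F x : EuclideanSpace ℝ (Fin n)) + ι y)) :
              EuclideanSpace ℝ (Fin n)))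
        = 0 := by
  classical
  -- R fixes F pointwise
  have hRF : ∀ v ∈ F, R v = v := fun v hv => (hF v).mp hv
  -- R maps E into E
  have hRE : ∀ w, w ∈ E → R w ∈ E := by
    intro w hw
    rw [hE, Submodule.mem_orthogonal]
    intro v hv
    have h1 : (inner ℝ v (R w) : ℝ) = inner ℝ v w := by
      conv_lhs => rw [← hRF v hv]
      exact R.inner_map_map v w
    rw [h1]
    exact (Submodule.mem_orthogonal F w).mp (hE ▸ hw) v hv
  -- Eᗮ = F
  have hEperp : Eᗮ = F := by rw [hE, Submodule.orthogonal_orthogonal]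
  -- orthogonal projection onto E commutes with R
  have hPE : ∀ z, (Submodule.orthogonalProjection E (R z) : EuclideanSpace ℝ (Fin n))
      = R (Submodule.orthogonalProjection E z : EuclideanSpace ℝ (Fin n)) := by
    intro z
    have hz : (Submodule.orthogonalProjection E z : EuclideanSpace ℝ (Fin n))
        + (Submodule.orthogonalProjection Eᗮ z : EuclideanSpace ℝ (Fin n)) = z :=
      Submodule.starProjection_add_starProjection_orthogonal (K := E) z
    have hmem1 : R (Submodule.orthogonalProjection E z : EuclideanSpace ℝ (Fin n)) ∈ E :=
      hRE _ (Submodule.orthogonalProjection E z).2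
    have hmem2 : (Submodule.orthogonalProjection Eᗮ z : EuclideanSpace ℝ (Fin n)) ∈ F :=
      (le_of_eq hEperp) (Submodule.orthogonalProjection Eᗮ z).2
    have hfix : R (Submodule.orthogonalProjection Eᗮ z : EuclideanSpace ℝ (Fin n))
        = (Submodule.orthogonalProjection Eᗮ z : EuclideanSpace ℝ (Fin n)) := hRF _ hmem2
    calc (Submodule.orthogonalProjection E (R z) : EuclideanSpace ℝ (Fin n))
        = (Submodule.orthogonalProjection E
            (R (Submodule.orthogonalProjection E z : EuclideanSpace ℝ (Fin n))
              + R (Submodule.orthogonalProjection Eᗮ z : EuclideanSpace ℝ (Fin n)))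
            : EuclideanSpace ℝ (Fin n)) := by rw [← map_add, hz]
      _ = R (Submodule.orthogonalProjection E z : EuclideanSpace ℝ (Fin n)) := by
          have hmem2' : (Submodule.orthogonalProjection Eᗮ z : EuclideanSpace ℝ (Fin n)) ∈ Eᗮ :=
            (Submodule.orthogonalProjection Eᗮ z).2
          rw [map_add, Submodule.coe_add, hfix,
            Submodule.orthogonalProjectionOnto_apply_of_mem_orthogonal hmem2',
            (show (Submodule.orthogonalProjection E (R (Submodule.orthogonalProjection E z : EuclideanSpace ℝ (Fin n))) : EuclideanSpace ℝ (Fin n)) = R (Submodule.orthogonalProjection E z : EuclideanSpace ℝ (Fin n)) from Submodule.starProjection_eq_self_iff.mpr hmem1), Submodule.coe_zero, add_zero]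
  -- gradient is equivariant
  have hdiff : ∀ z, DifferentiableAt ℝ g z := fun z => (hg.differentiable one_ne_zero).differentiableAt
  have hgrad : ∀ z, gradient g (R z) = R (gradient g z) := by
    intro z
    have h1 : HasFDerivAt g ((InnerProductSpace.toDual ℝ _) (gradient g (R z))) (R z) :=
      ((hdiff (R z)).hasGradientAt).hasFDerivAt
    have h2 : HasFDerivAt (g ∘ R)
        (((InnerProductSpace.toDual ℝ _) (gradient g (R z))).comp
          (R.toContinuousLinearEquiv : EuclideanSpace ℝ (Fin n) →L[ℝ]
            EuclideanSpace ℝ (Fin n))) z :=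
      h1.comp z (R.toContinuousLinearEquiv.toContinuousLinearMap.hasFDerivAt)
    have hgR : (g ∘ R) = g := funext hginv
    rw [hgR] at h2
    have h3 : (((InnerProductSpace.toDual ℝ _) (gradient g (R z))).comp
        (R.toContinuousLinearEquiv : EuclideanSpace ℝ (Fin n) →L[ℝ]
          EuclideanSpace ℝ (Fin n)))
        = (InnerProductSpace.toDual ℝ _) (R.symm (gradient g (R z))) := by
      ext v
      rw [ContinuousLinearMap.comp_apply]
      have hv : (R.toContinuousLinearEquiv : EuclideanSpace ℝ (Fin n) →L[ℝ]
          EuclideanSpace ℝ (Fin n)) v = R v := rfl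
      rw [hv]
      simp only [InnerProductSpace.toDual_apply_apply]
      rw [← R.inner_map_map (R.symm (gradient g (R z))) v, R.apply_symm_apply]
    rw [h3] at h2
    have h4 : HasGradientAt g (R.symm (gradient g (R z))) z := hasGradientAt_iff_hasFDerivAt.mpr h2
    have h5 := h4.gradient
    rw [h5, R.apply_symm_apply]
  -- parametrize E by ℝ^k
  have hmemι : ∀ y, ι y ∈ E := fun y => hι ▸ LinearMap.mem_range_self _ y
  let ι' : EuclideanSpace ℝ (Fin k) →ₗᵢ[ℝ] E :=
    { toLinearMap := (ι.toLinearMap).codRestrict E hmemι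
      norm_map' := fun y => by
        have : ‖((ι.toLinearMap.codRestrict E hmemι) y : EuclideanSpace ℝ (Fin n))‖ = ‖ι y‖ := rfl
        rw [show ‖(ι.toLinearMap.codRestrict E hmemι) y‖
            = ‖((ι.toLinearMap.codRestrict E hmemι) y : EuclideanSpace ℝ (Fin n))‖ from rfl,
          this, ι.norm_map] }
  have hfr : Module.finrank ℝ (EuclideanSpace ℝ (Fin k)) = Module.finrank ℝ E := by
    rw [← hι]
    exact (LinearMap.finrank_range_of_inj ι.injective).symm
  let eE : EuclideanSpace ℝ (Fin k) ≃ₗᵢ[ℝ] E := ι'.toLinearIsometryEquiv hfr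
  have hcoe : ∀ y, ((eE y : E) : EuclideanSpace ℝ (Fin n)) = ι y := fun y => by
    rw [LinearIsometry.toLinearIsometryEquiv_apply]
    rfl
  -- the induced isometry S of ℝ^k with ι (S y) = R (ι y)
  have hREι : ∀ y, R (ι y) ∈ E := fun y => hRE _ (hmemι y)
  let Tlm : EuclideanSpace ℝ (Fin k) →ₗ[ℝ] E :=
    ((R.toLinearEquiv.toLinearMap).comp ι.toLinearMap).codRestrict E hREι
  let Sli : EuclideanSpace ℝ (Fin k) →ₗᵢ[ℝ] EuclideanSpace ℝ (Fin k) :=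
    { toLinearMap := (eE.symm.toLinearEquiv.toLinearMap).comp Tlm
      norm_map' := fun y => by
        have h1 : ((eE.symm.toLinearEquiv.toLinearMap).comp Tlm) y = eE.symm (Tlm y) := rfl
        rw [h1, eE.symm.norm_map]
        have h2 : ‖Tlm y‖ = ‖(Tlm y : EuclideanSpace ℝ (Fin n))‖ := rfl
        have h3 : (Tlm y : EuclideanSpace ℝ (Fin n)) = R (ι y) := rfl
        rw [h2, h3, R.norm_map, ι.norm_map] }
  let S : EuclideanSpace ℝ (Fin k) ≃ₗᵢ[ℝ] EuclideanSpace ℝ (Fin k) :=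
    Sli.toLinearIsometryEquiv rfl
  have hS : ∀ y, ι (S y) = R (ι y) := by
    intro y
    have h1 : S y = eE.symm ⟨R (ι y), hREι y⟩ := by
      rw [LinearIsometry.toLinearIsometryEquiv_apply]
      rfl
    rw [← hcoe (S y), h1, eE.apply_symm_apply]
  -- main argument
  intro x
  set c : EuclideanSpace ℝ (Fin n) := (Submodule.orthogonalProjection F x : EuclideanSpace ℝ (Fin n)) with hc
  have hRc : R c = c := hRF _ (Submodule.orthogonalProjection F x).2
  set f : EuclideanSpace ℝ (Fin k) → EuclideanSpace ℝ (Fin n) := fun y =>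
    ρ (c + ι y) • (Submodule.orthogonalProjection E (gradient g (c + ι y)) : EuclideanSpace ℝ (Fin n))
    with hfdef
  -- pointwise equivariance
  have hfS : ∀ y, f (S y) = R (f y) := by
    intro y
    have hpt : c + ι (S y) = R (c + ι y) := by rw [hS, map_add, hRc]
    simp only [hfdef]
    rw [hpt, hρinv, hgrad, hPE, _root_.map_smul]
  set I : EuclideanSpace ℝ (Fin n) := ∫ y, f y with hI
  -- I is fixed by R
  have hIfix : R I = I := by
    have h1 : ∫ y, f (S y) = ∫ y, f y := MeasureTheory.integral_comp S f
    have h2 : ∫ y, f (S y) = ∫ y, R (f y) := by simp_rw [hfS]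
    have h3 : ∫ y, R (f y) = R (∫ y, f y) := R.toLinearIsometry.integral_comp_comm f
    rw [hI, ← h3, ← h2, h1]
  have hIF : I ∈ F := (hF I).mpr hIfix
  -- I lies in E
  have hIE : I ∈ E := by
    have hmemf : ∀ y, f y ∈ E := fun y =>
      E.smul_mem _ (Submodule.orthogonalProjection E (gradient g (c + ι y))).2
    have h1 : ∀ y, f y = ι (eE.symm ⟨f y, hmemf y⟩) := by
      intro y
      rw [← hcoe (eE.symm ⟨f y, hmemf y⟩), eE.apply_symm_apply]
    have h2 : I = ∫ y, ι (eE.symm ⟨f y, hmemf y⟩) := by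
      rw [hI]; exact integral_congr_ae (Filter.Eventually.of_forall h1)
    rw [h2, ι.integral_comp_comm]
    exact hmemι _
  -- F ∩ Fᗮ = 0
  have : I = 0 := by
    have hd : Disjoint F Fᗮ := Submodule.orthogonal_disjoint F
    exact (Submodule.disjoint_def.mp hd) I hIF (hE ▸ hIE)
  exact this
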